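/- Let q be a prime power and let B = (b_1,…,b_r, b_1^{(q)},…,b_r^{(q)}, …, b_1^{(q^{m−1})},…,b_r^{(q^{m−1})}) be an ordered basis of an rm-dimensional linear code C ⊆ F_{q^m}^n. Let M ∈ C_mat(B) have rank rm−1 and let v ∈ F_{q^m}^{rm} be a row vector with v·M = 0. Then for every i with 1 ≤ i ≤ m−1, the matrix (Sᵀ)^i · M^{(q^i)} · S^i belongs to C_mat(B), has rank rm−1, and satisfies (v^{(q^i)} · S^i) · ((Sᵀ)^i · M^{(q^i)} · S^i) = 0. -/

import Mathlib

open Matrix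

/-- Componentwise (Schur) product of two vectors. -/
def schur {F : Type*} [Field F] {n : ℕ} (a b : Fin n → F) : Fin n → F :=
  fun t => a t * b t

/-- The matrix code of quadratic relations associated with the ordered family `v`. -/
def Cmat {F : Type*} [Field F] {n : ℕ} {ι : Type*} [Fintype ι] [LinearOrder ι]
    (v : ι → Fin n → F) : Set (Matrix ι ι F) :=
  { M | ∃ c : ι → ι → F,
      (∑ i : ι, ∑ j : ι, (if i ≤ j then c i j • schur (v i) (v j) else 0)) = 0 ∧
      (∀ i j : ι, i < j → M i j = c i j ∧ M j i = c i j) ∧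
      (∀ i : ι, M i i = 2 * c i i) }

/-- Linear order on the index pairs `(j,i)`. -/
noncomputable instance pairLO (m r : ℕ) : LinearOrder (Fin m × Fin r) :=
  LinearOrder.lift' (fun p => finProdFinEquiv p) finProdFinEquiv.injective

/-- The right `r`-cyclic block shift matrix `S`: its block in position `(i,j)`
(with `r×r` blocks) is the identity if `j ≡ i + 1 (mod m)` and zero otherwise. -/
def shiftS (F : Type*) [Field F] (m r : ℕ) [NeZero m] :
    Matrix (Fin m × Fin r) (Fin m × Fin r) F :=
  Matrix.of fun p p' => if p'.1 = p.1 + 1 ∧ p'.2 = p.2 then 1 else 0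

lemma sum_pairs_perm {ι : Type*} [Fintype ι] [LinearOrder ι] {V : Type*} [AddCommMonoid V]
    (e : ι ≃ ι) (G : ι → ι → V) (hG : ∀ x y, G x y = G y x) :
    (∑ x : ι, ∑ y : ι, if x ≤ y then G (e x) (e y) else 0)
      = ∑ x : ι, ∑ y : ι, if x ≤ y then G x y else 0 := by
  classical
  have key : ∀ H : ι → ι → V,
      (∑ p ∈ Finset.univ.filter (fun p : ι × ι => p.1 ≤ p.2), H p.1 p.2)
        = ∑ x : ι, ∑ y : ι, if x ≤ y then H x y else 0 := by
    intro H
    rw [Finset.sum_filter, ← Finset.univ_product_univ, Finset.sum_product]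
  rw [← key, ← key]
  refine Finset.sum_nbij'
    (i := fun p : ι × ι => if e p.1 ≤ e p.2 then (e p.1, e p.2) else (e p.2, e p.1))
    (j := fun p : ι × ι => if e.symm p.1 ≤ e.symm p.2 then (e.symm p.1, e.symm p.2)
      else (e.symm p.2, e.symm p.1)) ?_ ?_ ?_ ?_ ?_
  · intro p _
    simp only [Finset.mem_filter, Finset.mem_univ, true_and]
    split_ifs with h
    · exact h
    · exact le_of_not_ge h
  · intro p _
    simp only [Finset.mem_filter, Finset.mem_univ, true_and]
    split_ifs with h
    · exact h
    · exact le_of_not_ge h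
  · intro p hp
    simp only [Finset.mem_filter, Finset.mem_univ, true_and] at hp
    by_cases h : e p.1 ≤ e p.2
    · simp [h, hp]
    · have hcon : ¬ p.2 ≤ p.1 := fun hle => h (by simp [le_antisymm hp hle])
      simp [h, hcon]
  · intro p hp
    simp only [Finset.mem_filter, Finset.mem_univ, true_and] at hp
    by_cases h : e.symm p.1 ≤ e.symm p.2
    · simp [h, hp]
    · have hcon : ¬ p.2 ≤ p.1 := fun hle => h (by simp [le_antisymm hp hle])
      simp [h, hcon]
  · intro p _
    split_ifs with h
    · rfl
    · exact hG _ _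

lemma rank_map_ringEquiv {K : Type*} [Field K] {ι ι' : Type*} [Fintype ι'] (A : Matrix ι ι' K)
    (ψ : K ≃+* K) : (A.map ψ).rank = A.rank := by
  classical
  have hmv : ∀ (y : ι' → K),
      (A.map ψ).mulVec (fun t => ψ (y t)) = fun j => ψ (A.mulVec y j) := by
    intro y
    funext j
    simp only [Matrix.mulVec, dotProduct, Matrix.map_apply, map_sum, _root_.map_mul]
  have h1 : ∀ x ∈ LinearMap.range A.mulVecLin,
      (fun t => ψ (x t)) ∈ LinearMap.range (A.map ψ).mulVecLin := by
    rintro x ⟨y, rfl⟩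
    exact ⟨fun t => ψ (y t), hmv y⟩
  have h2 : ∀ x ∈ LinearMap.range (A.map ψ).mulVecLin,
      (fun t => ψ.symm (x t)) ∈ LinearMap.range A.mulVecLin := by
    rintro x ⟨y, rfl⟩
    refine ⟨fun t => ψ.symm (y t), ?_⟩
    have h := hmv (fun t => ψ.symm (y t))
    simp only [RingEquiv.apply_symm_apply] at h
    funext j
    have h' := congrFun h j
    rw [mulVecLin_apply, mulVecLin_apply, h', RingEquiv.symm_apply_apply]
  let JJ : LinearMap.range A.mulVecLin ≃+ LinearMap.range (A.map ψ).mulVecLin :=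
  { toFun := fun x => ⟨fun t => ψ (x.1 t), h1 x.1 x.2⟩
    invFun := fun x => ⟨fun t => ψ.symm (x.1 t), h2 x.1 x.2⟩
    left_inv := fun x => by ext t; exact ψ.symm_apply_apply _
    right_inv := fun x => by ext t; exact ψ.apply_symm_apply _
    map_add' := fun x y => by ext t; exact _root_.map_add ψ _ _ }
  have hrk : Module.rank K (LinearMap.range A.mulVecLin)
      = Module.rank K (LinearMap.range (A.map ψ).mulVecLin) := by
    refine rank_eq_of_equiv_equiv (⟨(ψ : K → K), map_zero ψ⟩ : ZeroHom K K) JJ ψ.bijective ?_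
    intro r x
    ext t
    exact _root_.map_mul ψ r _
  show Module.finrank K (LinearMap.range (A.map ψ).mulVecLin)
      = Module.finrank K (LinearMap.range A.mulVecLin)
  unfold Module.finrank
  rw [hrk]

attribute [-instance] Prod.instLE_mathlib Prod.instPreorder Prod.instPartialOrder
  Prod.instLattice Prod.instDistribLattice Prod.instSemilatticeInf Prod.instSemilatticeSup

open Fin.NatCast

/-- Let `q` be a prime power, `F = F_{q^m}`, and let
`B = (b_1,…,b_r, b_1^{(q)},…,b_r^{(q)}, …, b_1^{(q^{m−1})},…,b_r^{(q^{m−1})})` be an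
ordered basis of an `rm`-dimensional linear code `C ⊆ F^n`. If `M ∈ C_mat(B)` has rank
`rm − 1` and `v` is a row vector with `v·M = 0`, then for every `1 ≤ i ≤ m − 1` the
matrix `(Sᵀ)^i · M^{(q^i)} · S^i` belongs to `C_mat(B)`, has rank `rm − 1`, and is
annihilated by the row vector `v^{(q^i)} · S^i`. -/
theorem cmat_frobenius_shift_kernel
    (q m r n : ℕ) [NeZero m] (hq : ∃ p e : ℕ, p.Prime ∧ 0 < e ∧ q = p ^ e)
    (hr : 0 < r) (hn : 0 < n)
    (F : Type*) [Field F] [Fintype F] (hF : Fintype.card F = q ^ m)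
    (β : Fin r → Fin n → F)
    (b : Fin m × Fin r → Fin n → F)
    (hb : b = fun p t => β p.2 t ^ q ^ (p.1 : ℕ))
    (hbind : LinearIndependent F b)
    (M : Matrix (Fin m × Fin r) (Fin m × Fin r) F)
    (hM : M ∈ Cmat b) (hrank : M.rank = r * m - 1)
    (v : Fin m × Fin r → F) (hv : Matrix.vecMul v M = 0) :
    ∀ i : ℕ, 1 ≤ i → i ≤ m - 1 →
      ((shiftS F m r)ᵀ ^ i * (Matrix.of fun p p' => M p p' ^ q ^ i) * shiftS F m r ^ i
          ∈ Cmat b) ∧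
      ((shiftS F m r)ᵀ ^ i * (Matrix.of fun p p' => M p p' ^ q ^ i) *
          shiftS F m r ^ i).rank = r * m - 1 ∧
      Matrix.vecMul (Matrix.vecMul (fun p => v p ^ q ^ i) (shiftS F m r ^ i))
          ((shiftS F m r)ᵀ ^ i * (Matrix.of fun p p' => M p p' ^ q ^ i) *
            shiftS F m r ^ i) = 0 := by
  intro i hi1 hi2
  letI instLO : LinearOrder (Fin m × Fin r) := pairLO m r
  obtain ⟨p, e, hp, he, hqe⟩ := hq
  have hm : 0 < m := Nat.pos_of_ne_zero (NeZero.ne m)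
  haveI hfp : Fact p.Prime := ⟨hp⟩
  haveI hcharp : CharP F p := by
    obtain ⟨np, hp', hcard'⟩ := FiniteField.card F (ringChar F)
    have hdvd : p ∣ ringChar F ^ (np : ℕ) := by
      rw [← hcard', hF, hqe, ← pow_mul]
      exact dvd_pow_self p (by positivity)
    have hpr : p = ringChar F :=
      (Nat.prime_dvd_prime_iff_eq hp hp').mp (hp.dvd_of_dvd_pow hdvd)
    exact hpr ▸ ringChar.charP F
  -- power reduction lemmas
  have hpowm : ∀ (d : ℕ) (x : F), x ^ (q ^ m) ^ d = x := by
    intro d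
    induction d with
    | zero => intro x; simp
    | succ d ih => intro x; rw [pow_succ, pow_mul, ih, ← hF, FiniteField.pow_card]
  have hmod : ∀ (a : ℕ) (x : F), x ^ q ^ a = x ^ q ^ (a % m) := by
    intro a x
    conv_lhs => rw [← Nat.div_add_mod a m, pow_add, pow_mul q m, pow_mul x, hpowm]
  have hmodeq : ∀ {a a' : ℕ} (x : F), a % m = a' % m → x ^ q ^ a = x ^ q ^ a' := by
    intro a a' x h
    rw [hmod a x, h, ← hmod]
  have hqpow_add : ∀ (a a' : ℕ) (x : F), (x ^ q ^ a) ^ q ^ a' = x ^ q ^ (a + a') := by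
    intro a a' x; rw [← pow_mul, ← pow_add]
  have hmul_exp : i + i * (m - 1) = i * m := by
    have h1 : m - 1 + 1 = m := Nat.succ_pred_eq_of_pos hm
    calc i + i * (m - 1) = i * ((m - 1) + 1) := by ring
    _ = i * m := by rw [h1]
  have hadd : ∀ x y : F, (x + y) ^ q ^ i = x ^ q ^ i + y ^ q ^ i := by
    intro x y
    have hqq : q ^ i = p ^ (e * i) := by rw [hqe, ← pow_mul]
    rw [hqq]
    exact add_pow_char_pow (R := F) x y p (e * i)
  let ψ : F ≃+* F :=
  { toFun := fun x => x ^ q ^ i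
    invFun := fun x => x ^ q ^ (i * (m - 1))
    left_inv := fun x => by
      show (x ^ q ^ i) ^ q ^ (i * (m - 1)) = x
      rw [hqpow_add, hmodeq x (show (i + i * (m - 1)) % m = 0 % m by
        rw [hmul_exp]; simp [Nat.mul_mod_left])]
      simp
    right_inv := fun x => by
      show (x ^ q ^ (i * (m - 1))) ^ q ^ i = x
      rw [hqpow_add, hmodeq x (show (i * (m - 1) + i) % m = 0 % m by
        rw [Nat.add_comm, hmul_exp]; simp [Nat.mul_mod_left])]
      simp
    map_mul' := fun x y => mul_pow x y _
    map_add' := hadd }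
  let σ : (Fin m × Fin r) ≃ (Fin m × Fin r) :=
  { toFun := fun z => (z.1 + (i : Fin m), z.2)
    invFun := fun z => (z.1 - (i : Fin m), z.2)
    left_inv := fun z => by
      show (z.1 + (i : Fin m) - (i : Fin m), z.2) = z
      rw [add_sub_cancel_right]
    right_inv := fun z => by
      show (z.1 - (i : Fin m) + (i : Fin m), z.2) = z
      rw [sub_add_cancel] }
  -- powers of the shift matrix
  have hS : ∀ k : ℕ, shiftS F m r ^ k
      = Matrix.of (fun z z' : Fin m × Fin r =>
          if z'.1 = z.1 + (k : Fin m) ∧ z'.2 = z.2 then (1 : F) else 0) := by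
    intro k
    induction k with
    | zero =>
      ext z z'
      rw [pow_zero]
      by_cases h : z = z'
      · subst h; simp [Matrix.one_apply]
      · simp only [Matrix.one_apply, Matrix.of_apply, Nat.cast_zero, add_zero, if_neg h]
        rw [if_neg]
        intro hc
        exact h (Prod.ext_iff.mpr ⟨hc.1.symm, hc.2.symm⟩)
    | succ k ih =>
      rw [pow_succ, ih]
      ext z z'
      rw [Matrix.mul_apply]
      have hrow : ∀ a : Fin m × Fin r,
          (Matrix.of (fun w w' : Fin m × Fin r =>
            if w'.1 = w.1 + (k : Fin m) ∧ w'.2 = w.2 then (1:F) else 0)) z a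
          = if a = ((z.1 + (k : Fin m), z.2) : Fin m × Fin r) then (1:F) else 0 := by
        intro a
        simp only [Matrix.of_apply]
        congr 1
        apply propext
        rw [Prod.ext_iff]
      simp only [hrow, ite_mul, one_mul, zero_mul, Finset.sum_ite_eq', Finset.mem_univ, if_true]
      show (if z'.1 = (z.1 + (k : Fin m)) + 1 ∧ z'.2 = z.2 then (1:F) else 0)
        = if z'.1 = z.1 + ((k+1 : ℕ) : Fin m) ∧ z'.2 = z.2 then (1:F) else 0
      have hcast : ((k + 1 : ℕ) : Fin m) = (k : Fin m) + 1 := by push_cast; ring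
      rw [hcast, ← add_assoc]
  have hSk : ∀ a z : Fin m × Fin r, (shiftS F m r ^ i) a z
      = if a = ((z.1 - (i : Fin m), z.2) : Fin m × Fin r) then (1 : F) else 0 := by
    intro a z
    rw [hS]
    simp only [Matrix.of_apply]
    congr 1
    apply propext
    constructor
    · rintro ⟨h1, h2⟩
      have hz : z.1 - (i : Fin m) = a.1 := by rw [h1]; exact add_sub_cancel_right _ _
      exact Prod.ext_iff.mpr ⟨hz.symm, h2.symm⟩
    · rintro rfl
      exact ⟨(sub_add_cancel _ _).symm, rfl⟩
  have hSk' : ∀ a z : Fin m × Fin r, (shiftS F m r ^ i) z a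
      = if a = ((z.1 + (i : Fin m), z.2) : Fin m × Fin r) then (1 : F) else 0 := by
    intro a z
    rw [hS]
    simp only [Matrix.of_apply]
    congr 1
    apply propext
    rw [Prod.ext_iff]
  have hT : (shiftS F m r)ᵀ ^ i = (shiftS F m r ^ i)ᵀ :=
    (Matrix.transpose_pow (shiftS F m r) i).symm
  -- entries of the conjugated matrix
  have hN : ∀ z z' : Fin m × Fin r,
      ((shiftS F m r)ᵀ ^ i * (Matrix.of fun a a' => M a a' ^ q ^ i) * shiftS F m r ^ i) z z'
        = (M (σ.symm z) (σ.symm z')) ^ q ^ i := by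
    intro z z'
    rw [Matrix.mul_apply]
    simp only [hSk, mul_ite, mul_one, mul_zero, Finset.sum_ite_eq', Finset.mem_univ, if_true]
    rw [Matrix.mul_apply, hT]
    simp only [Matrix.transpose_apply, hSk, ite_mul, one_mul, zero_mul, Finset.sum_ite_eq',
      Finset.mem_univ, if_true]
    rfl
  -- S^i is invertible
  have hST : shiftS F m r ^ i * (shiftS F m r ^ i)ᵀ = 1 := by
    ext z z'
    rw [Matrix.mul_apply, Matrix.one_apply]
    simp only [Matrix.transpose_apply, hSk', ite_mul, one_mul, zero_mul, Finset.sum_ite_eq',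
      Finset.mem_univ, if_true]
    congr 1
    apply propext
    constructor
    · intro h
      have h' := Prod.ext_iff.mp h
      exact Prod.ext_iff.mpr ⟨add_right_cancel h'.1, h'.2⟩
    · rintro rfl; rfl
  have hdet : IsUnit (shiftS F m r ^ i).det := Matrix.isUnit_det_of_right_inverse hST
  have hdetT : IsUnit ((shiftS F m r)ᵀ ^ i).det := by
    rw [hT, Matrix.det_transpose]; exact hdet
  -- decompose the membership hypothesis
  obtain ⟨c, hc0, hlt, hdiag⟩ := hM
  have hMsymm : ∀ x y, M x y = M y x := by
    intro x y
    rcases @lt_trichotomy _ (pairLO m r) x y with h | h | h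
    · rw [(hlt x y h).1, (hlt x y h).2]
    · rw [h]
    · rw [(hlt y x h).1, (hlt y x h).2]
  set ct : (Fin m × Fin r) → (Fin m × Fin r) → F :=
    fun x y => if x = y then c x x else M x y with hct
  have hct_symm : ∀ x y, ct x y = ct y x := by
    intro x y
    by_cases h : x = y
    · subst h; rfl
    · rw [hct]; simp only; rw [if_neg h, if_neg (Ne.symm h)]; exact hMsymm x y
  have hMoff : ∀ x y, x ≠ y → M x y = ct x y := by
    intro x y hxy
    rw [hct]; simp only; rw [if_neg hxy]
  -- Frobenius shift of the basis
  have hb_shift : ∀ (z : Fin m × Fin r) (t : Fin n), b (σ z) t = ψ (b z t) := by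
    intro z t
    rw [hb]
    show β z.2 t ^ q ^ ((z.1 + (i : Fin m)) : Fin m).val
      = (β z.2 t ^ q ^ (z.1 : ℕ)) ^ q ^ i
    rw [hqpow_add]
    apply hmodeq
    rw [Fin.val_add, Fin.val_natCast, Nat.mod_mod_of_dvd _ dvd_rfl]
    exact Nat.ModEq.add_left _ (Nat.mod_modEq i m)
  refine ⟨⟨fun a a' => ψ (ct (σ.symm a) (σ.symm a')), ?_, ?_, ?_⟩, ?_, ?_⟩
  · -- the quadratic relation
    have hGsymm : ∀ x y : Fin m × Fin r,
        ψ (ct (σ.symm x) (σ.symm y)) • schur (b x) (b y)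
          = ψ (ct (σ.symm y) (σ.symm x)) • schur (b y) (b x) := by
      intro x y
      rw [hct_symm (σ.symm x) (σ.symm y),
        show schur (b x) (b y) = schur (b y) (b x) from funext fun t => mul_comm _ _]
    rw [← sum_pairs_perm σ (fun a a' => ψ (ct (σ.symm a) (σ.symm a')) • schur (b a) (b a'))
      hGsymm]
    funext t
    simp only [Finset.sum_apply, Pi.zero_apply, apply_ite (fun f : Fin n → F => f t),
      Pi.smul_apply, smul_eq_mul, schur]
    have hc0t := congrFun hc0 t
    simp only [Finset.sum_apply, Pi.zero_apply, apply_ite (fun f : Fin n → F => f t),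
      Pi.smul_apply, smul_eq_mul, schur] at hc0t
    have h2 := congrArg ψ hc0t
    rw [map_zero, map_sum] at h2
    simp only [map_sum, apply_ite (⇑ψ), map_zero, _root_.map_mul] at h2
    refine Eq.trans (Finset.sum_congr rfl fun x _ => Finset.sum_congr rfl fun y _ => ?_) h2
    split_ifs with hxy
    · rw [σ.symm_apply_apply, σ.symm_apply_apply, hb_shift, hb_shift]
      have hcc : ct x y = c x y := by
        by_cases h : x = y
        · subst h; rw [hct]; simp
        · rw [hct]; simp only; rw [if_neg h]
          exact (hlt x y (lt_of_le_of_ne hxy h)).1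
      rw [hcc]
    · rfl
  · -- off-diagonal entries
    intro x y hxy
    have hne : σ.symm x ≠ σ.symm y := fun h => (ne_of_lt hxy) (σ.symm.injective h)
    constructor
    · rw [hN, hMoff _ _ hne]; rfl
    · rw [hN, hMoff _ _ (Ne.symm hne), hct_symm]; rfl
  · -- diagonal entries
    intro x
    rw [hN, hdiag]
    show ψ (2 * c (σ.symm x) (σ.symm x)) = 2 * ψ (ct (σ.symm x) (σ.symm x))
    rw [_root_.map_mul, show ct (σ.symm x) (σ.symm x) = c (σ.symm x) (σ.symm x) from by
      rw [hct]; simp]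
    congr 1
    exact map_ofNat ψ 2
  · -- rank
    rw [Matrix.rank_mul_eq_left_of_isUnit_det _ _ hdet,
      Matrix.rank_mul_eq_right_of_isUnit_det _ _ hdetT,
      show (Matrix.of fun a a' => M a a' ^ q ^ i) = M.map ⇑ψ from rfl,
      rank_map_ringEquiv M ψ, hrank]
  · -- kernel vector
    rw [← Matrix.vecMul_vecMul, ← Matrix.vecMul_vecMul]
    have hv1 : Matrix.vecMul (fun z => v z ^ q ^ i) (shiftS F m r ^ i)
        = fun z => v (z.1 - (i : Fin m), z.2) ^ q ^ i := by
      funext z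
      simp only [Matrix.vecMul, dotProduct, hSk, mul_ite, mul_one, mul_zero,
        Finset.sum_ite_eq', Finset.mem_univ, if_true]
    have h1 : Matrix.vecMul (Matrix.vecMul (fun z => v z ^ q ^ i) (shiftS F m r ^ i))
        ((shiftS F m r)ᵀ ^ i) = fun z => v z ^ q ^ i := by
      rw [hv1, hT]
      funext z
      simp only [Matrix.vecMul, dotProduct, Matrix.transpose_apply, hSk', mul_ite,
        mul_one, mul_zero, Finset.sum_ite_eq', Finset.mem_univ, if_true]
      rw [add_sub_cancel_right]
    rw [h1]
    have h2 : Matrix.vecMul (fun z => v z ^ q ^ i) (Matrix.of fun a a' => M a a' ^ q ^ i)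
        = 0 := by
      funext z
      have hcoord : Matrix.vecMul (fun z => v z ^ q ^ i)
          (Matrix.of fun a a' => M a a' ^ q ^ i) z = ψ (Matrix.vecMul v M z) := by
        simp only [Matrix.vecMul, dotProduct, Matrix.of_apply, map_sum,
          _root_.map_mul]
        rfl
      rw [hcoord, hv]
      simp
    rw [h2, Matrix.zero_vecMul]
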